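/- Capacity for error-free binary-symmetric links: there exists a unique P* ∈ (0,1) such that H(P*) = 1 − P*; moreover P* < 1/4, and sup over P ∈ [0,1] of min{ 1 − P, H(P) } = 1 − P*, which in particular is strictly greater than 3/4 (and hence strictly greater than the conventional relaying rate 1/2). -/
import Mathlib


/-- The binary entropy function (in bits), with the convention `0·log2 0 = 0`. -/
noncomputable def binH (p : ℝ) : ℝ :=
  -(p * Real.logb 2 p) - (1 - p) * Real.logb 2 (1 - p)

lemma binH_eq (p : ℝ) : binH p = Real.binEntropy p / Real.log 2 := by
  simp [binH, Real.binEntropy, Real.logb, Real.log_inv]; ring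

/-- Helper: the "fixed point" function. -/
noncomputable def Ffun (p : ℝ) : ℝ := Real.binEntropy p - (1 - p) * Real.log 2

lemma log2_pos : (0:ℝ) < Real.log 2 := Real.log_pos (by norm_num)

lemma binH_fix_iff (p : ℝ) : binH p = 1 - p ↔ Ffun p = 0 := by
  rw [binH_eq, Ffun, div_eq_iff (ne_of_gt log2_pos), sub_eq_zero]

lemma binE_quarter : Real.binEntropy (1/4) = 2 * Real.log 2 - (3/4) * Real.log 3 := by
  have l43 : Real.log (4/3) = Real.log 4 - Real.log 3 := Real.log_div (by norm_num) (by norm_num)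
  have l4 : Real.log 4 = 2 * Real.log 2 := by
    rw [show (4:ℝ) = 2^2 by norm_num, Real.log_pow]; push_cast; ring
  simp only [Real.binEntropy]
  norm_num
  rw [l43, l4]; ring

lemma F_quarter_pos : 0 < Ffun (1/4) := by
  have h : Real.log 27 < Real.log 32 := Real.log_lt_log (by norm_num) (by norm_num)
  have h27 : Real.log 27 = 3 * Real.log 3 := by
    rw [show (27:ℝ) = 3^3 by norm_num, Real.log_pow]; push_cast; ring
  have h32 : Real.log 32 = 5 * Real.log 2 := by
    rw [show (32:ℝ) = 2^5 by norm_num, Real.log_pow]; push_cast; ring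
  rw [Ffun, binE_quarter]
  rw [h27, h32] at h
  nlinarith

lemma F_strictMono : StrictMonoOn Ffun (Set.Icc (0:ℝ) 2⁻¹) := by
  intro x hx y hy hxy
  have h1 := Real.binEntropy_strictMonoOn hx hy hxy
  have := log2_pos
  unfold Ffun
  nlinarith

lemma F_continuous : Continuous Ffun :=
  Real.binEntropy_continuous.sub (by fun_prop)

/-- binEntropy s > 2 s log 2 for s ∈ (0, 1/2). -/
lemma binE_gt (s : ℝ) (hs0 : 0 < s) (hs1 : s < 1/2) :
    2 * s * Real.log 2 < Real.binEntropy s := by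
  have h := Real.strictConcave_binEntropy.2
    (Set.mem_Icc.2 ⟨le_rfl, by norm_num⟩ : (0:ℝ) ∈ Set.Icc (0:ℝ) 1)
    (Set.mem_Icc.2 ⟨by norm_num, by norm_num⟩ : (2⁻¹:ℝ) ∈ Set.Icc (0:ℝ) 1)
    (by norm_num) (show (0:ℝ) < 1 - 2*s by linarith) (show (0:ℝ) < 2*s by linarith)
    (by ring)
  simp only [smul_eq_mul, Real.binEntropy_zero, Real.binEntropy_two_inv, mul_zero,
    zero_add] at h
  rw [show (2:ℝ)*s*2⁻¹ = s by ring] at h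
  linarith [h]

/-- capacity for error-free binary-symmetric links: there exists a unique
`P* ∈ (0,1)` with `H(P*) = 1 − P*`; moreover `P* < 1/4`, and
`sup_{P ∈ [0,1]} min{ 1 − P, H(P) } = 1 − P* > 3/4` (hence the capacity strictly
exceeds the conventional relaying rate `1/2`). -/
theorem capacity_error_free_BSC :
    ∃ Pstar ∈ Set.Ioo (0:ℝ) 1,
      binH Pstar = 1 - Pstar ∧
      (∀ Q ∈ Set.Ioo (0:ℝ) 1, binH Q = 1 - Q → Q = Pstar) ∧
      Pstar < 1/4 ∧
      sSup {r : ℝ | ∃ P ∈ Set.Icc (0:ℝ) 1, r = min (1 - P) (binH P)} = 1 - Pstar ∧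
      3/4 < 1 - Pstar := by
  -- existence of the fixed point in (0, 1/4)
  have hF0 : Ffun 0 < 0 := by simp [Ffun]; positivity
  obtain ⟨P, hP, hFP⟩ : ∃ P ∈ Set.Ioo (0:ℝ) (1/4), Ffun P = 0 := by
    have := intermediate_value_Ioo (a := (0:ℝ)) (b := 1/4) (by norm_num)
      F_continuous.continuousOn
    obtain ⟨P, hP, hFP⟩ := this (Set.mem_Ioo.2 ⟨hF0, F_quarter_pos⟩)
    exact ⟨P, hP, hFP⟩
  have hP0 : 0 < P := hP.1
  have hP4 : P < 1/4 := hP.2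
  have hPmem : P ∈ Set.Icc (0:ℝ) 2⁻¹ := ⟨hP0.le, by linarith⟩
  have hfixP : binH P = 1 - P := (binH_fix_iff P).2 hFP
  -- uniqueness
  have huniq : ∀ Q ∈ Set.Ioo (0:ℝ) 1, binH Q = 1 - Q → Q = P := by
    intro Q hQ hfix
    have hFQ : Ffun Q = 0 := (binH_fix_iff Q).1 hfix
    by_cases hhalf : Q ≤ 2⁻¹
    · exact F_strictMono.injOn ⟨hQ.1.le, hhalf⟩ hPmem (hFQ.trans hFP.symm)
    · exfalso
      push_neg at hhalf
      set s := 1 - Q with hs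
      have hs0 : 0 < s := by simp [hs]; linarith [hQ.2]
      have hs1 : s < 1/2 := by simp [hs]; linarith
      have := binE_gt s hs0 hs1
      have hsym : Real.binEntropy Q = Real.binEntropy s := by
        rw [hs, Real.binEntropy_one_sub]
      have : Ffun Q > 0 := by
        rw [Ffun, hsym]
        have := log2_pos
        nlinarith
      linarith [hFQ]
  -- sup
  have hub : ∀ r ∈ {r : ℝ | ∃ P' ∈ Set.Icc (0:ℝ) 1, r = min (1 - P') (binH P')},
      r ≤ 1 - P := by
    rintro r ⟨Q, hQ, rfl⟩
    rcases le_or_gt P Q with h | h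
    · exact (min_le_left _ _).trans (by linarith)
    · -- Q < P, use monotonicity: binH Q < binH P = 1 - P
      refine (min_le_right _ _).trans ?_
      have hmono : Real.binEntropy Q < Real.binEntropy P :=
        Real.binEntropy_strictMonoOn ⟨hQ.1, by linarith⟩ hPmem h
      have : binH Q < binH P := by
        rw [binH_eq, binH_eq]
        gcongr
      linarith [hfixP]
  have hmem : (1 - P) ∈ {r : ℝ | ∃ P' ∈ Set.Icc (0:ℝ) 1, r = min (1 - P') (binH P')} :=
    ⟨P, ⟨hP0.le, by linarith⟩, by rw [hfixP, min_self]⟩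
  exact ⟨P, ⟨hP0, by linarith⟩, hfixP, huniq, hP4,
    le_antisymm (csSup_le ⟨_, hmem⟩ hub) (le_csSup ⟨1 - P, hub⟩ hmem), by linarith⟩
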